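/- Let G be a 3-free digraph on n vertices, and let a→b→c→d→a be a directed 4-cycle in G. For distinct vertices u,v let m(u,v) be the number of vertices x such that (u,x,v) is an induced directed 3-vertex path. Then m(a,c) + m(c,a) + m(b,d) + m(d,b) ≤ n. -/
import Mathlib


/-- A digraph is 3-free: no directed cycles of length 1, 2 or 3. -/
def ThreeFree {V : Type*} (E : V → V → Prop) : Prop :=
  (∀ v, ¬ E v v) ∧ (∀ u v, ¬ (E u v ∧ E v u)) ∧
    ∀ u v w, ¬ (E u v ∧ E v w ∧ E w u)

/-- `(u, x, v)` is an induced directed 3-vertex path. -/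
def InducedP3 {V : Type*} (E : V → V → Prop) (u x v : V) : Prop :=
  u ≠ x ∧ x ≠ v ∧ u ≠ v ∧ E u x ∧ E x v ∧ ¬ E x u ∧ ¬ E v x ∧ ¬ E u v ∧ ¬ E v u

instance {V : Type*} [DecidableEq V] (E : V → V → Prop) [DecidableRel E] (u x v : V) :
    Decidable (InducedP3 E u x v) := by unfold InducedP3; infer_instance

/-- The number of induced 3-vertex paths from `u` to `v` (counted by middle vertex). -/
def mCount (n : ℕ) (E : Fin n → Fin n → Prop) [DecidableRel E] (u v : Fin n) : ℕ :=
  (Finset.univ.filter fun x => InducedP3 E u x v).card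

theorem middle_vertices_bound (n : ℕ) (E : Fin n → Fin n → Prop) [DecidableRel E]
    (h3 : ThreeFree E) (a b c d : Fin n)
    (hab : a ≠ b) (hac : a ≠ c) (had : a ≠ d) (hbc : b ≠ c) (hbd : b ≠ d) (hcd : c ≠ d)
    (e1 : E a b) (e2 : E b c) (e3 : E c d) (e4 : E d a) :
    mCount n E a c + mCount n E c a + mCount n E b d + mCount n E d b ≤ n := by
  obtain ⟨h1, h2f, h3f⟩ := h3
  classical
  set S1 := Finset.univ.filter fun x => InducedP3 E a x c with hS1
  set S2 := Finset.univ.filter fun x => InducedP3 E c x a with hS2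
  set S3 := Finset.univ.filter fun x => InducedP3 E b x d with hS3
  set S4 := Finset.univ.filter fun x => InducedP3 E d x b with hS4
  have mem1 : ∀ x ∈ S1, InducedP3 E a x c := fun x hx => (Finset.mem_filter.mp hx).2
  have mem2 : ∀ x ∈ S2, InducedP3 E c x a := fun x hx => (Finset.mem_filter.mp hx).2
  have mem3 : ∀ x ∈ S3, InducedP3 E b x d := fun x hx => (Finset.mem_filter.mp hx).2
  have mem4 : ∀ x ∈ S4, InducedP3 E d x b := fun x hx => (Finset.mem_filter.mp hx).2
  have d12 : Disjoint S1 S2 := Finset.disjoint_left.mpr fun x hx hx' => by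
    obtain ⟨_,_,_,_,p1,_⟩ := mem1 x hx
    obtain ⟨_,_,_,p2,_⟩ := mem2 x hx'
    exact h2f x c ⟨p1, p2⟩
  have d34 : Disjoint S3 S4 := Finset.disjoint_left.mpr fun x hx hx' => by
    obtain ⟨_,_,_,_,p1,_⟩ := mem3 x hx
    obtain ⟨_,_,_,p2,_⟩ := mem4 x hx'
    exact h2f x d ⟨p1, p2⟩
  have d13 : Disjoint S1 S3 := Finset.disjoint_left.mpr fun x hx hx' => by
    obtain ⟨_,_,_,p1,_,_⟩ := mem1 x hx
    obtain ⟨_,_,_,_,p2,_⟩ := mem3 x hx'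
    exact h3f x d a ⟨p2, e4, p1⟩
  have d14 : Disjoint S1 S4 := Finset.disjoint_left.mpr fun x hx hx' => by
    obtain ⟨_,_,_,_,p1,_⟩ := mem1 x hx
    obtain ⟨_,_,_,p2,_⟩ := mem4 x hx'
    exact h3f x c d ⟨p1, e3, p2⟩
  have d23 : Disjoint S2 S3 := Finset.disjoint_left.mpr fun x hx hx' => by
    obtain ⟨_,_,_,_,p1,_⟩ := mem2 x hx
    obtain ⟨_,_,_,p2,_⟩ := mem3 x hx'
    exact h3f x a b ⟨p1, e1, p2⟩
  have d24 : Disjoint S2 S4 := Finset.disjoint_left.mpr fun x hx hx' => by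
    obtain ⟨_,_,_,p1,_⟩ := mem2 x hx
    obtain ⟨_,_,_,_,p2,_⟩ := mem4 x hx'
    exact h3f x b c ⟨p2, e2, p1⟩
  have key : mCount n E a c + mCount n E c a + mCount n E b d + mCount n E d b
      = (S1 ∪ S2 ∪ S3 ∪ S4).card := by
    rw [Finset.card_union_of_disjoint, Finset.card_union_of_disjoint,
      Finset.card_union_of_disjoint d12]
    · rfl
    · exact Finset.disjoint_union_left.mpr ⟨d13, d23⟩
    · exact Finset.disjoint_union_left.mpr ⟨Finset.disjoint_union_left.mpr ⟨d14, d24⟩, d34⟩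
  rw [key]
  calc (S1 ∪ S2 ∪ S3 ∪ S4).card ≤ (Finset.univ : Finset (Fin n)).card :=
        Finset.card_le_card (Finset.subset_univ _)
    _ = n := Finset.card_univ.trans (Fintype.card_fin n)
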